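/- Let R, S be finite sets and M an R×S real matrix of rank |R|. Define the determinantal measure μ on |R|-element subsets T of S by μ(T) = det(M_{•,T})² / det(M M^t), where M_{•,T} is the square submatrix with columns T. Then μ is a probability measure; moreover, letting P = M^t (M M^t)^{-1} M, for any B ⊆ S we have μ({T : B ⊆ T}) = det P_{B,B} and μ({T : T ∩ B = ∅}) = det(Id − P)_{B,B}. -/

import Mathlib

open Finset Matrix

section Aux
variable {ι : Type*} [Fintype ι] [DecidableEq ι]

lemma det_eq_det_submatrixE (Q : Matrix ι ι ℝ) (E : Finset ι)
    (h : ∀ i ∉ E, ∀ j, Q i j = if i = j then 1 else 0) :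
    Q.det = (Q.submatrix (fun e : ↥E => (e : ι)) (fun e : ↥E => (e : ι))).det := by
  rw [Matrix.twoBlockTriangular_det Q (fun i => i ∈ E)
      (fun i hi j hj => by rw [h i hi j]; exact if_neg (fun hij => hi (by rwa [hij])))]
  have h2 : (Q.toSquareBlockProp fun i => ¬ i ∈ E) = 1 := by
    ext i j
    rw [Matrix.toSquareBlockProp_def, Matrix.of_apply, h i.1 i.2 j.1, Matrix.one_apply]
    simp [Subtype.ext_iff]
  rw [h2, Matrix.det_one, mul_one]
  have h3 := @Matrix.det_submatrix_equiv_self {a // (fun i => i ∈ E) a} ↥E _ _ _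
      (Subtype.fintype fun i => i ∈ E) ℝ _
      (Equiv.subtypeEquivRight fun x => Iff.rfl) (Q.toSquareBlockProp fun i => i ∈ E)
  exact h3.symm

lemma det_optionRow (W : Matrix (Option ι) (Option ι) ℝ)
    (h : ∀ b, W none b = if b = none then 1 else 0) :
    W.det = (W.submatrix some some).det := by
  rw [← Matrix.det_submatrix_equiv_self (Equiv.optionEquivSumPUnit.{0} ι).symm W]
  have hW : W.submatrix ⇑(Equiv.optionEquivSumPUnit.{0} ι).symm ⇑(Equiv.optionEquivSumPUnit.{0} ι).symm
      = Matrix.fromBlocks (W.submatrix some some)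
      (Matrix.of fun i (_ : PUnit) => W (some i) none) 0 (Matrix.of fun _ _ => 1) := by
    ext a b
    rcases a with a | a <;> rcases b with b | b <;>
      simp [Matrix.fromBlocks, h, Equiv.optionEquivSumPUnit]
  rw [hW, Matrix.det_fromBlocks_zero₂₁]
  have : (Matrix.of fun (_ _ : PUnit) => (1 : ℝ)).det = 1 := by
    rw [Matrix.det_unique]; rfl
  rw [this, mul_one]

lemma det_optionCol (W : Matrix (Option ι) (Option ι) ℝ)
    (h : ∀ a, W a none = if a = none then 1 else 0) :
    W.det = (W.submatrix some some).det := by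
  rw [← Matrix.det_transpose W, det_optionRow Wᵀ (fun b => h b)]
  rw [← Matrix.det_transpose (W.submatrix some some)]
  rfl

lemma det_option_expand (Q : Matrix (Option ι) (Option ι) ℝ) :
    Q.det = Q none none * (Q.submatrix some some).det
      - ∑ i : ι, ∑ j : ι,
          Q none (some i) * (Q.submatrix some some).adjugate i j * Q (some j) none := by
  classical
  set A := Q.submatrix some some with hA
  have hrow := Matrix.det_eq_sum_mul_adjugate_row Q none
  rw [Fintype.sum_option] at hrow
  have h0 : Q.adjugate none none = A.det := by
    rw [Matrix.adjugate_apply]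
    rw [det_optionRow (Q.updateRow none (Pi.single none 1))
        (fun b => by rw [Matrix.updateRow_self]; simp [Pi.single_apply])]
    have : (Q.updateRow none (Pi.single none 1)).submatrix some some = A := by
      ext k l
      simp [Matrix.updateRow_apply, hA]
    rw [this]
  have h1 : ∀ i : ι, Q.adjugate (some i) none
      = ∑ j : ι, Q (some j) none * (-(A.adjugate i j)) := by
    intro i
    rw [Matrix.adjugate_apply]
    set W := Q.updateRow none (Pi.single (some i) 1) with hW
    have hcol := Matrix.det_eq_sum_mul_adjugate_col W none
    rw [Fintype.sum_option] at hcol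
    have hW0 : W none none = 0 := by rw [hW, Matrix.updateRow_self]; simp
    have hRij : ∀ j : ι, W.adjugate none (some j) = -(A.adjugate i j) := by
      intro j
      rw [Matrix.adjugate_apply]
      set R := W.updateRow (some j) (Pi.single none 1) with hR
      have hswap := Matrix.det_permute (Equiv.swap none (some j)) R
      rw [Equiv.Perm.sign_swap (by simp)] at hswap
      have hrow' : ∀ b, (R.submatrix (⇑(Equiv.swap none (some j))) id) none b
          = if b = none then 1 else 0 := by
        intro b
        simp only [Matrix.submatrix_apply, Equiv.swap_apply_left, id_eq]
        rw [hR, Matrix.updateRow_self]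
        simp [Pi.single_apply]
      have h2 := det_optionRow _ hrow'
      have h3 : (R.submatrix (⇑(Equiv.swap none (some j))) id).submatrix some some
          = A.updateRow j (Pi.single i 1) := by
        ext k l
        simp only [Matrix.submatrix_apply, Matrix.updateRow_apply, id_eq]
        by_cases hkj : k = j
        · subst hkj
          rw [if_pos rfl, Equiv.swap_apply_right, hR]
          rw [Matrix.updateRow_apply]
          simp only [if_neg (by simp : (none : Option ι) ≠ some k)]
          rw [hW, Matrix.updateRow_self]
          simp [Pi.single_apply]
        · rw [if_neg hkj, Equiv.swap_apply_of_ne_of_ne (by simp) (by simp [hkj]), hR,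
            Matrix.updateRow_apply, if_neg (by simp [hkj]), hW,
            Matrix.updateRow_apply, if_neg (by simp), hA]
          rfl
      have h4 : (A.updateRow j (Pi.single i 1)).det = -R.det := by
        rw [← h3, ← h2, hswap]; norm_num
      rw [Matrix.adjugate_apply, h4, neg_neg]
    have hWj : ∀ j : ι, W (some j) none = Q (some j) none := by
      intro j
      rw [hW, Matrix.updateRow_apply, if_neg (by simp)]
    rw [hcol, hW0, zero_mul, zero_add]
    exact Finset.sum_congr rfl fun j _ => by rw [hWj j, hRij j]
  rw [hrow, h0]
  have hsum : ∑ i : ι, Q none (some i) * Q.adjugate (some i) none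
      = -∑ i : ι, ∑ j : ι, Q none (some i) * A.adjugate i j * Q (some j) none := by
    rw [← Finset.sum_neg_distrib]
    refine Finset.sum_congr rfl fun i _ => ?_
    rw [h1 i, Finset.mul_sum, ← Finset.sum_neg_distrib]
    exact Finset.sum_congr rfl fun j _ => by ring
  rw [hsum]
  ring
end Aux

section Aux2
variable {S : Type*} [Fintype S] [DecidableEq S]

noncomputable def pdet' (P : Matrix S S ℝ) (B : Finset S) : ℝ :=
  (P.submatrix (fun b : ↥B => (b : S)) (fun b : ↥B => (b : S))).det

/-- The option-indexed bordered matrix for `B` and a point `s`. -/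
noncomputable def bmat (P : Matrix S S ℝ) (B : Finset S) (s : S) :
    Matrix (Option ↥B) (Option ↥B) ℝ :=
  Matrix.of fun a b => P (a.elim s (fun x => (x : S))) (b.elim s (fun x => (x : S)))

lemma bmat_submatrix (P : Matrix S S ℝ) (B : Finset S) (s : S) :
    (bmat P B s).submatrix some some
      = P.submatrix (fun b : ↥B => (b : S)) (fun b : ↥B => (b : S)) := rfl

lemma pdet'_insert (P : Matrix S S ℝ) (B : Finset S) {s : S} (hs : s ∉ B) :
    pdet' P (insert s B) = (bmat P B s).det := by
  unfold pdet'
  refine Eq.trans ?_ (Matrix.det_submatrix_equiv_self (Finset.subtypeInsertEquivOption hs) (bmat P B s))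
  refine congrArg Matrix.det ?_
  ext a b
  by_cases ha : (a : S) = s <;> by_cases hb : (b : S) = s <;>
    simp [Finset.subtypeInsertEquivOption, ha, hb, bmat]

lemma bmat_det_mem (P : Matrix S S ℝ) (B : Finset S) {s : S} (hs : s ∈ B) :
    (bmat P B s).det = 0 := by
  refine Matrix.det_zero_of_row_eq (i := none) (j := some ⟨s, hs⟩) (by simp) ?_
  funext b
  rfl

lemma key_sum (P : Matrix S S ℝ) (hP : P * P = P) (B : Finset S) :
    ∑ s ∈ Bᶜ, pdet' P (insert s B) = (P.trace - B.card) * pdet' P B := by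
  classical
  set X := P.submatrix (fun b : ↥B => (b : S)) (fun b : ↥B => (b : S)) with hX
  have h1 : ∀ s : S, (bmat P B s).det
      = P s s * pdet' P B - ∑ i : ↥B, ∑ j : ↥B,
          P s (i : S) * X.adjugate i j * P (j : S) s := by
    intro s
    rw [det_option_expand (bmat P B s), bmat_submatrix]
    rfl
  have h2 : ∑ s ∈ Bᶜ, pdet' P (insert s B) = ∑ s : S, (bmat P B s).det := by
    rw [Finset.sum_congr rfl (fun s hs => pdet'_insert P B (Finset.mem_compl.mp hs))]
    exact Finset.sum_subset (Finset.subset_univ Bᶜ)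
      (fun s _ hs => bmat_det_mem P B (by simpa using hs))
  rw [h2, Finset.sum_congr rfl fun s _ => h1 s]
  rw [Finset.sum_sub_distrib]
  have h3 : ∑ s : S, P s s * pdet' P B = P.trace * pdet' P B := by
    rw [← Finset.sum_mul]; rfl
  have h4 : ∑ s : S, ∑ i : ↥B, ∑ j : ↥B, P s (i : S) * X.adjugate i j * P (j : S) s
      = (B.card : ℝ) * pdet' P B := by
    rw [Finset.sum_comm]
    have : ∀ i : ↥B, ∑ s : S, ∑ j : ↥B, P s (i : S) * X.adjugate i j * P (j : S) s
        = ∑ j : ↥B, X.adjugate i j * X j i := by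
      intro i
      rw [Finset.sum_comm]
      refine Finset.sum_congr rfl fun j _ => ?_
      have : ∑ s : S, P s (i : S) * X.adjugate i j * P (j : S) s
          = X.adjugate i j * ∑ s : S, P (j : S) s * P s (i : S) := by
        rw [Finset.mul_sum]
        exact Finset.sum_congr rfl fun s _ => by ring
      rw [this]
      have hPP : ∑ s : S, P (j : S) s * P s (i : S) = P (j : S) (i : S) := by
        have := congrFun (congrFun hP (j : S)) (i : S)
        simpa [Matrix.mul_apply] using this
      rw [hPP]
      rfl
    rw [Finset.sum_congr rfl fun i _ => this i]
    have : ∑ i : ↥B, ∑ j : ↥B, X.adjugate i j * X j i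
        = (X.adjugate * X).trace := by
      unfold Matrix.trace
      exact Finset.sum_congr rfl fun i _ => by rw [Matrix.diag_apply, Matrix.mul_apply]
    rw [this, Matrix.adjugate_mul, Matrix.trace_smul, Matrix.trace_one]
    simp [pdet', hX, Fintype.card_coe, smul_eq_mul]
    ring
  rw [h3, h4]
  ring

lemma sum_pdet_filter (P : Matrix S S ℝ) (hP : P * P = P) (r : ℕ) (htr : P.trace = r) :
    ∀ (k : ℕ) (B : Finset S), B.card + k = r →
      ∑ T ∈ (Finset.univ.powersetCard r).filter (fun T => B ⊆ T), pdet' P T = pdet' P B := by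
  intro k
  induction k with
  | zero =>
    intro B hB
    rw [Nat.add_zero] at hB
    have hfil : (Finset.univ.powersetCard r).filter (fun T => B ⊆ T) = {B} := by
      ext T
      simp only [Finset.mem_filter, Finset.mem_powersetCard, Finset.mem_singleton]
      constructor
      · rintro ⟨⟨-, hcard⟩, hBT⟩
        exact (Finset.eq_of_subset_of_card_le hBT (by omega)).symm
      · rintro rfl
        exact ⟨⟨Finset.subset_univ _, hB⟩, Finset.Subset.refl _⟩
    rw [hfil, Finset.sum_singleton]
  | succ k ih =>
    intro B hB
    have hlt : B.card < r := by omega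
    have hkey := key_sum P hP B
    rw [htr] at hkey
    have hins : ∀ s ∈ Bᶜ, pdet' P (insert s B)
        = ∑ T ∈ (Finset.univ.powersetCard r).filter (fun T => insert s B ⊆ T), pdet' P T := by
      intro s hs
      exact (ih (insert s B) (by
        rw [Finset.card_insert_of_notMem (Finset.mem_compl.mp hs)]; omega)).symm
    rw [Finset.sum_congr rfl hins] at hkey
    have hswap : ∑ s ∈ Bᶜ, ∑ T ∈ (Finset.univ.powersetCard r).filter
          (fun T => insert s B ⊆ T), pdet' P T
        = ∑ T ∈ (Finset.univ.powersetCard r).filter (fun T => B ⊆ T),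
            ∑ s ∈ T \ B, pdet' P T := by
      refine Finset.sum_comm' ?_
      intro s T
      simp only [Finset.mem_compl, Finset.mem_filter, Finset.mem_powersetCard,
        Finset.mem_sdiff, Finset.insert_subset_iff]
      constructor
      · rintro ⟨hsB, ⟨hTu, hTc⟩, hsT, hBT⟩
        exact ⟨⟨hsT, hsB⟩, ⟨hTu, hTc⟩, hBT⟩
      · rintro ⟨⟨hsT, hsB⟩, ⟨hTu, hTc⟩, hBT⟩
        exact ⟨hsB, ⟨hTu, hTc⟩, hsT, hBT⟩
    rw [hswap] at hkey
    have hcard : ∀ T ∈ (Finset.univ.powersetCard r).filter (fun T => B ⊆ T),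
        ∑ s ∈ T \ B, pdet' P T = ((r : ℝ) - B.card) * pdet' P T := by
      intro T hT
      rw [Finset.sum_const, nsmul_eq_mul]
      simp only [Finset.mem_filter, Finset.mem_powersetCard] at hT
      rw [Finset.card_sdiff_of_subset hT.2, hT.1.2, Nat.cast_sub hlt.le]
    rw [Finset.sum_congr rfl hcard, ← Finset.mul_sum] at hkey
    have hne : (r : ℝ) - B.card ≠ 0 := by
      have : (B.card : ℝ) < r := by exact_mod_cast hlt
      linarith
    exact mul_left_cancel₀ hne hkey
end Aux2

/-- Lyons' determinantal measure lemma.  Let `M` be an `R × S` real matrix of full rank `|R|`,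
and define the determinantal measure on `|R|`-element subsets `T` of `S` by
`μ T = det(M_{•,T})² / det(M Mᵀ)` (here `det(M_{•,T})² = det(M_{•,T} (M_{•,T})ᵀ)`, the latter
being the square matrix `∑_{s ∈ T} M i s * M j s`).  Then `μ` is a probability measure, and
with `P = Mᵀ (M Mᵀ)⁻¹ M` (the projection onto the row space of `M`), for every `B ⊆ S`:
`μ {T : B ⊆ T} = det P_{B,B}` and `μ {T : T ∩ B = ∅} = det (Id − P)_{B,B}`. -/
theorem stmt14 {R S : Type} [Fintype R] [Fintype S] [DecidableEq R] [DecidableEq S]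
    (M : Matrix R S ℝ) (hrank : M.rank = Fintype.card R) :
    let μ : Finset S → ℝ := fun T =>
      (Matrix.of fun i j => ∑ s ∈ T, M i s * M j s : Matrix R R ℝ).det / (M * Mᵀ).det
    let P : Matrix S S ℝ := Mᵀ * (M * Mᵀ)⁻¹ * M
    (∑ T ∈ Finset.univ.powersetCard (Fintype.card R), μ T) = 1 ∧
    (∀ B : Finset S,
      (∑ T ∈ (Finset.univ.powersetCard (Fintype.card R)).filter (fun T => B ⊆ T), μ T) =
        (P.submatrix (fun b : ↥B => (b : S)) (fun b : ↥B => (b : S))).det) ∧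
    (∀ B : Finset S,
      (∑ T ∈ (Finset.univ.powersetCard (Fintype.card R)).filter (fun T => T ∩ B = ∅), μ T) =
        ((1 - P).submatrix (fun b : ↥B => (b : S)) (fun b : ↥B => (b : S))).det) := by
  intro μ P
  have hrk : (M * Mᵀ).rank = Fintype.card R := by
    rw [Matrix.rank_self_mul_transpose, hrank]
  -- invertibility of M * Mᵀ
  have hft : Module.finrank ℝ (LinearMap.range (M * Mᵀ).mulVecLin)
      = Module.finrank ℝ (R → ℝ) := by
    rw [Module.finrank_fintype_fun_eq_card]
    exact hrk
  have hsurj : Function.Surjective (M * Mᵀ).mulVec := by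
    have htop := Submodule.eq_top_of_finrank_eq hft
    intro v
    obtain ⟨w, hw⟩ := LinearMap.range_eq_top.mp htop v
    exact ⟨w, hw⟩
  have hA : IsUnit (M * Mᵀ) := Matrix.mulVec_surjective_iff_isUnit.mp hsurj
  have hd : IsUnit (M * Mᵀ).det := (Matrix.isUnit_iff_isUnit_det _).mp hA
  -- idempotence and trace
  have hPP : P * P = P := by
    show (Mᵀ * (M * Mᵀ)⁻¹ * M) * (Mᵀ * (M * Mᵀ)⁻¹ * M) = Mᵀ * (M * Mᵀ)⁻¹ * M
    calc (Mᵀ * (M * Mᵀ)⁻¹ * M) * (Mᵀ * (M * Mᵀ)⁻¹ * M)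
        = Mᵀ * (M * Mᵀ)⁻¹ * ((M * Mᵀ) * ((M * Mᵀ)⁻¹ * M)) := by
          simp only [Matrix.mul_assoc]
      _ = Mᵀ * (M * Mᵀ)⁻¹ * M := by
          rw [← Matrix.mul_assoc (M * Mᵀ), Matrix.mul_nonsing_inv _ hd, Matrix.one_mul]
  have htr : P.trace = (Fintype.card R : ℝ) := by
    show (Mᵀ * (M * Mᵀ)⁻¹ * M).trace = _
    rw [Matrix.mul_assoc, Matrix.trace_mul_comm, Matrix.mul_assoc,
      Matrix.nonsing_inv_mul _ hd]
    simp
  -- μ agrees with the principal minor of P on size-r sets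
  have hmu : ∀ T ∈ Finset.univ.powersetCard (Fintype.card R), μ T = pdet' P T := by
    intro T hT
    rw [Finset.mem_powersetCard] at hT
    have hcard : Fintype.card R = Fintype.card ↥T := by
      rw [Fintype.card_coe, hT.2]
    let e : R ≃ ↥T := Fintype.equivOfCardEq hcard
    let g : R → S := fun i => ((e i : ↥T) : S)
    let Q : Matrix R R ℝ := M.submatrix id g
    have hnum : (Matrix.of fun i j => ∑ s ∈ T, M i s * M j s : Matrix R R ℝ) = Q * Qᵀ := by
      ext i j
      rw [Matrix.of_apply, Matrix.mul_apply, ← Finset.sum_coe_sort T]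
      rw [← Equiv.sum_comp e (fun t : ↥T => M i (t : S) * M j (t : S))]
      rfl
    have hden : pdet' P T = Q.det * Q.det * ((M * Mᵀ).det)⁻¹ := by
      unfold pdet'
      rw [← Matrix.det_submatrix_equiv_self e (P.submatrix _ _), Matrix.submatrix_submatrix]
      have hsub : P.submatrix ((fun b : ↥T => (b : S)) ∘ e) ((fun b : ↥T => (b : S)) ∘ e)
          = Qᵀ * (M * Mᵀ)⁻¹ * Q := by
        show ((Mᵀ * (M * Mᵀ)⁻¹) * M).submatrix g g = _
        rw [← Matrix.submatrix_mul_equiv (Mᵀ * (M * Mᵀ)⁻¹) M g (Equiv.refl R) g]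
        simp only [Equiv.coe_refl]
        rw [← Matrix.submatrix_mul_equiv Mᵀ ((M * Mᵀ)⁻¹) g (Equiv.refl R) id]
        simp only [Equiv.coe_refl, Matrix.submatrix_id_id]
        rfl
      rw [hsub, Matrix.det_mul, Matrix.det_mul, Matrix.det_transpose,
        Matrix.det_nonsing_inv, Ring.inverse_eq_inv']
      show Q.det * ((M * Mᵀ).det)⁻¹ * Q.det = _
      ring
    show (Matrix.of fun i j => ∑ s ∈ T, M i s * M j s : Matrix R R ℝ).det / (M * Mᵀ).det = _
    rw [hnum, hden, Matrix.det_mul, Matrix.det_transpose, div_eq_mul_inv]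
  -- part 2, general B
  have hpart2 : ∀ B : Finset S,
      (∑ T ∈ (Finset.univ.powersetCard (Fintype.card R)).filter (fun T => B ⊆ T), μ T)
        = pdet' P B := by
    intro B
    rw [Finset.sum_congr rfl (fun T hT => hmu T (Finset.mem_of_mem_filter T hT))]
    by_cases hBr : B.card ≤ Fintype.card R
    · exact sum_pdet_filter P hPP (Fintype.card R) htr (Fintype.card R - B.card) B (by omega)
    · have hfil : (Finset.univ.powersetCard (Fintype.card R)).filter (fun T => B ⊆ T) = ∅ := by
        refine Finset.filter_eq_empty_iff.mpr ?_
        intro T hT hBT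
        rw [Finset.mem_powersetCard] at hT
        exact hBr (le_trans (Finset.card_le_card hBT) (le_of_eq hT.2))
      rw [hfil, Finset.sum_empty]
      -- pdet' P B = 0 because rank
      unfold pdet'
      have hPsub : P.submatrix (fun b : ↥B => (b : S)) (fun b : ↥B => (b : S))
          = ((Mᵀ * (M * Mᵀ)⁻¹).submatrix (fun b : ↥B => (b : S)) id)
            * (M.submatrix id (fun b : ↥B => (b : S))) := by
        show ((Mᵀ * (M * Mᵀ)⁻¹) * M).submatrix _ _ = _
        rw [← Matrix.submatrix_mul_equiv (Mᵀ * (M * Mᵀ)⁻¹) M _ (Equiv.refl R) _]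
        simp only [Equiv.coe_refl]
      by_contra h0
      have h0' : IsUnit (P.submatrix (fun b : ↥B => (b : S)) (fun b : ↥B => (b : S))).det := by
        exact isUnit_iff_ne_zero.mpr (fun h => h0 h.symm)
      have hUnit := (Matrix.isUnit_iff_isUnit_det _).mpr h0'
      have hrank1 := Matrix.rank_of_isUnit _ hUnit
      rw [Fintype.card_coe] at hrank1
      have hle : (P.submatrix (fun b : ↥B => (b : S)) (fun b : ↥B => (b : S))).rank
          ≤ Fintype.card R := by
        rw [hPsub]
        exact le_trans (Matrix.rank_mul_le_right _ _) (Matrix.rank_le_card_height _)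
      omega
  refine ⟨?_, fun B => hpart2 B, ?_⟩
  · -- total mass one
    have h1 : Finset.univ.powersetCard (Fintype.card R)
        = (Finset.univ.powersetCard (Fintype.card R)).filter
            (fun T => (∅ : Finset S) ⊆ T) := by
      rw [Finset.filter_true_of_mem (fun T _ => Finset.empty_subset T)]
    rw [h1, hpart2 ∅]
    unfold pdet'
    haveI : IsEmpty ↥(∅ : Finset S) := Finset.isEmpty_coe_sort.mpr rfl
    exact Matrix.det_isEmpty
  · -- part 3
    intro B
    classical
    set X := P.submatrix (fun b : ↥B => (b : S)) (fun b : ↥B => (b : S)) with hX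
    have h1m : (1 - P).submatrix (fun b : ↥B => (b : S)) (fun b : ↥B => (b : S)) = 1 - X := by
      ext i j
      simp only [Matrix.submatrix_apply, Matrix.sub_apply, hX]
      congr 1
      rw [Matrix.one_apply, Matrix.one_apply]
      simp only [Subtype.ext_iff]
    rw [h1m]
    have hexp := MultilinearMap.map_add_univ
      (Matrix.detRowAlternating (R := ℝ) (n := ↥B)).toMultilinearMap
      (fun k => (-X) k) (fun k => (1 : Matrix ↥B ↥B ℝ) k)
    simp only [AlternatingMap.coe_multilinearMap] at hexp
    have hdet : (1 - X).det = ∑ E : Finset ↥B,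
        Matrix.detRowAlternating
          (E.piecewise (fun k => (-X) k) (fun k => (1 : Matrix ↥B ↥B ℝ) k)) := by
      have heq : (1 - X) = (Matrix.of ((fun k => (-X) k) + (fun k => (1 : Matrix ↥B ↥B ℝ) k))
          : Matrix ↥B ↥B ℝ) := by
        ext i j
        show (1 - X) i j = (-X) i j + (1 : Matrix ↥B ↥B ℝ) i j
        simp only [Matrix.sub_apply, Matrix.neg_apply, Matrix.one_apply]
        ring
      rw [heq]
      exact hexp
    have hW : ∀ E : Finset ↥B,
        Matrix.detRowAlternating
          (E.piecewise (fun k => (-X) k) (fun k => (1 : Matrix ↥B ↥B ℝ) k))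
        = (-1 : ℝ) ^ E.card
          * (X.submatrix (fun e : ↥E => (e : ↥B)) (fun e : ↥E => (e : ↥B))).det := by
      intro E
      set W : Matrix ↥B ↥B ℝ :=
        Matrix.of (E.piecewise (fun k => (-X) k) (fun k => (1 : Matrix ↥B ↥B ℝ) k)) with hWdef
      have h1 : Matrix.detRowAlternating
          (E.piecewise (fun k => (-X) k) (fun k => (1 : Matrix ↥B ↥B ℝ) k)) = W.det := rfl
      rw [h1, det_eq_det_submatrixE W E (fun i hi j => by
        show (E.piecewise (fun k => (-X) k) (fun k => (1 : Matrix ↥B ↥B ℝ) k)) i j = _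
        rw [Finset.piecewise_eq_of_notMem _ _ _ hi, Matrix.one_apply])]
      have h2 : W.submatrix (fun e : ↥E => (e : ↥B)) (fun e : ↥E => (e : ↥B))
          = -(X.submatrix (fun e : ↥E => (e : ↥B)) (fun e : ↥E => (e : ↥B))) := by
        ext a b
        show (E.piecewise (fun k => (-X) k) (fun k => (1 : Matrix ↥B ↥B ℝ) k)) (a : ↥B) (b : ↥B)
          = _
        rw [Finset.piecewise_eq_of_mem _ _ _ a.2]
        rfl
      rw [h2, Matrix.det_neg, Fintype.card_coe]
    have hmap : ∀ E : Finset ↥B,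
        (X.submatrix (fun e : ↥E => (e : ↥B)) (fun e : ↥E => (e : ↥B))).det
          = pdet' P (E.map ⟨Subtype.val, Subtype.val_injective⟩) := by
      intro E
      have hf : Function.Bijective (fun x : ↥E =>
          (⟨((x : ↥B) : S), Finset.mem_map_of_mem _ x.2⟩
            : ↥(E.map ⟨Subtype.val, Subtype.val_injective⟩))) := by
        constructor
        · intro x y h
          exact Subtype.ext (Subtype.ext (by simpa using congrArg Subtype.val h))
        · intro y
          obtain ⟨a, ha, hay⟩ := Finset.mem_map.mp y.2
          exact ⟨⟨a, ha⟩, Subtype.ext hay⟩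
      unfold pdet'
      rw [← Matrix.det_submatrix_equiv_self (Equiv.ofBijective _ hf) (P.submatrix _ _)]
      simp only [Matrix.submatrix_submatrix]
      exact congrArg Matrix.det (by ext a b; rfl)
    have hmain : (1 - X).det
        = ∑ E : Finset ↥B, (-1 : ℝ) ^ E.card
            * pdet' P (E.map ⟨Subtype.val, Subtype.val_injective⟩) := by
      rw [hdet]
      exact Finset.sum_congr rfl fun E _ => by rw [hW E, hmap E]
    have hsum2 : ∀ E : Finset ↥B,
        pdet' P (E.map ⟨Subtype.val, Subtype.val_injective⟩)
          = ∑ T ∈ (Finset.univ.powersetCard (Fintype.card R)).filter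
              (fun T => (E.map ⟨Subtype.val, Subtype.val_injective⟩) ⊆ T), μ T :=
      fun E => (hpart2 _).symm
    rw [Finset.sum_congr rfl fun E _ => by rw [hsum2 E]] at hmain
    -- swap summation order
    have hswap : ∑ E : Finset ↥B, (-1 : ℝ) ^ E.card
          * ∑ T ∈ (Finset.univ.powersetCard (Fintype.card R)).filter
              (fun T => (E.map ⟨Subtype.val, Subtype.val_injective⟩) ⊆ T), μ T
        = ∑ T ∈ Finset.univ.powersetCard (Fintype.card R),
            (∑ E ∈ Finset.univ.filter
                (fun E : Finset ↥B => (E.map ⟨Subtype.val, Subtype.val_injective⟩) ⊆ T),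
              (-1 : ℝ) ^ E.card) * μ T := by
      have hstep1 : ∑ E : Finset ↥B, (-1 : ℝ) ^ E.card
            * ∑ T ∈ (Finset.univ.powersetCard (Fintype.card R)).filter
                (fun T => (E.map ⟨Subtype.val, Subtype.val_injective⟩) ⊆ T), μ T
          = ∑ E : Finset ↥B, ∑ T ∈ Finset.univ.powersetCard (Fintype.card R),
              (if (E.map ⟨Subtype.val, Subtype.val_injective⟩) ⊆ T
                then (-1 : ℝ) ^ E.card * μ T else 0) :=
        Finset.sum_congr rfl (fun E _ => by rw [Finset.mul_sum, Finset.sum_filter])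
      rw [hstep1, Finset.sum_comm]
      refine Finset.sum_congr rfl fun T _ => ?_
      rw [Finset.sum_mul, ← Finset.sum_filter]
    rw [hswap] at hmain
    have hinner : ∀ T : Finset S,
        (∑ E ∈ Finset.univ.filter
            (fun E : Finset ↥B => (E.map ⟨Subtype.val, Subtype.val_injective⟩) ⊆ T),
          (-1 : ℝ) ^ E.card)
        = if T ∩ B = ∅ then 1 else 0 := by
      intro T
      have hFT : Finset.univ.filter
          (fun E : Finset ↥B => (E.map ⟨Subtype.val, Subtype.val_injective⟩) ⊆ T)
          = (Finset.univ.filter (fun b : ↥B => (b : S) ∈ T)).powerset := by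
        ext E
        simp only [Finset.mem_filter, Finset.mem_univ, true_and, Finset.mem_powerset]
        constructor
        · intro h x hx
          exact Finset.mem_filter.mpr ⟨Finset.mem_univ x, h (Finset.mem_map_of_mem _ hx)⟩
        · intro h x hx
          obtain ⟨a, ha, rfl⟩ := Finset.mem_map.mp hx
          exact (Finset.mem_filter.mp (h ha)).2
      rw [hFT]
      have hz := Finset.sum_powerset_neg_one_pow_card
        (x := Finset.univ.filter (fun b : ↥B => (b : S) ∈ T))
      have hcast : (∑ E ∈ (Finset.univ.filter (fun b : ↥B => (b : S) ∈ T)).powerset,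
          (-1 : ℝ) ^ E.card)
          = ((∑ E ∈ (Finset.univ.filter (fun b : ↥B => (b : S) ∈ T)).powerset,
              (-1 : ℤ) ^ E.card : ℤ) : ℝ) := by
        push_cast
        rfl
      rw [hcast, hz]
      have hiff : (Finset.univ.filter (fun b : ↥B => (b : S) ∈ T) = ∅) ↔ (T ∩ B = ∅) := by
        rw [Finset.eq_empty_iff_forall_notMem, Finset.eq_empty_iff_forall_notMem]
        constructor
        · intro h x hx
          rw [Finset.mem_inter] at hx
          exact h ⟨x, hx.2⟩ (by simpa using hx.1)
        · intro h b hb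
          rw [Finset.mem_filter] at hb
          exact h (b : S) (Finset.mem_inter.mpr ⟨hb.2, b.2⟩)
      split
      · rw [if_pos (hiff.mp (by assumption))]; norm_num
      · rw [if_neg (fun hc => (by assumption : ¬ _) (hiff.mpr hc))]; norm_num
    rw [Finset.sum_congr rfl (fun T _ => by rw [hinner T])] at hmain
    rw [hmain]
    rw [Finset.sum_filter]
    refine Finset.sum_congr rfl fun T _ => ?_
    split <;> simp
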